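/- Let ε = (E_1,…,E_n) be an exceptional sequence in a hereditary Hom-finite abelian category H over an algebraically closed field, and suppose a < b are indices such that there exists a nonzero monomorphism f : E_a → E_b, while Hom(E_i, E_j) = 0 for all other pairs a ≤ i < j ≤ b. Then Ext^1(E_a, E_i) = 0 and Hom(E_a, E_i) = 0 for all a < i < b. -/

import Mathlib

open CategoryTheory Limits

attribute [local instance] CategoryTheory.Abelian.hasFiniteBiproducts

universe w v u

variable (K : Type u) [Field K] [IsAlgClosed K]
variable (C : Type u) [Category.{v} C] [Abelian C] [Linear K C] [HasExt.{w} C]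

/-- An object of an abelian category is indecomposable if it is nonzero and has
no nontrivial biproduct decomposition. -/
def IsIndec (X : C) : Prop :=
  ¬ Limits.IsZero X ∧ ∀ Y Z : C, Nonempty (X ≅ Y ⊞ Z) → Limits.IsZero Y ∨ Limits.IsZero Z

/-!
Ringel's transposition lemma, part (a): if `(E_1,…,E_n)` is an exceptional
sequence, `a < b`, there is a nonzero monomorphism `f : E_a → E_b`, and
`Hom(E_i,E_j) = 0` for all other pairs `a ≤ i < j ≤ b`, then
`Ext¹(E_a,E_i) = 0` and `Hom(E_a,E_i) = 0` for all `a < i < b`.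
-/

theorem transposition_lemma_mono
    (homFin : ∀ X Y : C, FiniteDimensional K (X ⟶ Y))
    -- hereditary: `Ext²` vanishes
    (hHered : ∀ X Y : C, Subsingleton (Abelian.Ext X Y 2))
    (n : ℕ) (E : Fin n → C)
    (hExcObj : ∀ i, IsIndec C (E i) ∧ Subsingleton (Abelian.Ext (E i) (E i) 1))
    (hSeq : ∀ i j : Fin n, j < i →
      (∀ f : E i ⟶ E j, f = 0) ∧ Subsingleton (Abelian.Ext (E i) (E j) 1))
    (a b : Fin n) (hab : a < b)
    (f : E a ⟶ E b) (hf : f ≠ 0) (hmono : Mono f)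
    (hvan : ∀ i j : Fin n, a ≤ i → i < j → j ≤ b → ¬(i = a ∧ j = b) →
      ∀ g : E i ⟶ E j, g = 0) :
    ∀ i : Fin n, a < i → i < b →
      Subsingleton (Abelian.Ext (E a) (E i) 1) ∧ (∀ g : E a ⟶ E i, g = 0) := by
  intro i hai hib
  -- Hom vanishing is immediate from `hvan`
  have hhom : ∀ g : E a ⟶ E i, g = 0 := by
    intro g
    exact hvan a i le_rfl hai (le_of_lt hib) (by rintro ⟨-, rfl⟩; exact absurd hib (lt_irrefl _)) g
  refine ⟨?_, hhom⟩
  -- short exact sequence 0 → E a → E b → coker f → 0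
  set S : ShortComplex C := ShortComplex.mk f (cokernel.π f) (cokernel.condition f) with hS
  have hSE : S.ShortExact := by
    apply ShortComplex.ShortExact.mk'
    · exact ShortComplex.exact_of_f_is_kernel _
        (Abelian.monoIsKernelOfCokernel (CokernelCofork.ofπ _ (cokernel.condition f))
          (cokernelIsCokernel f))
    · exact hmono
    · exact (inferInstance : Epi (cokernel.π f))
  constructor
  intro x y
  suffices h : ∀ z : Abelian.Ext (E a) (E i) 1, z = 0 by rw [h x, h y]
  intro z
  have i2 := hHered (cokernel f) (E i)
  have i1 := (hSeq b i hib).2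
  have hz2 : hSE.extClass.comp z (show 1 + 1 = 2 by norm_num) = 0 :=
    Subsingleton.elim _ _
  obtain ⟨x₂, hx₂⟩ := Abelian.Ext.contravariant_sequence_exact₁ hSE (E i) z
    (show 1 + 1 = 2 by norm_num) hz2
  have hx0 : x₂ = 0 := Subsingleton.elim _ _
  rw [← hx₂, hx0, Abelian.Ext.comp_zero]
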